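/- Let L be a Lie ring whose derived ideal L' = [L, L] is abelian, nonzero, not contained in the center of L, and minimal in the sense that the only ideals of L contained in L' are 0 and L'. Then for every x ∈ L that does not centralize L', the Cartan subring C_L(x) is abnormal in L: every subring u of L with C_L(x) ⊆ u satisfies N_L(u) = u. In fact the only subrings containing C_L(x) are C_L(x) itself and L. -/
import Mathlib


/-- Let `L` be a Lie ring whose derived ideal `L'` is abelian, nonzero, not
contained in the center, and minimal.  Then for every `x ∈ L` not centralizing `L'`, the
Cartan subring `C_L(x)` is abnormal in `L`: every subring `u` with `C_L(x) ⊆ u` satisfies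
`N_L(u) = u`.  In fact the only subrings containing `C_L(x)` are `C_L(x)` itself and `L`. -/
theorem stmt_8 {L : Type*} [LieRing L]
    (habel : ∀ a ∈ LieAlgebra.derivedSeries ℤ L 1, ∀ b ∈ LieAlgebra.derivedSeries ℤ L 1,
      ⁅a, b⁆ = (0 : L))
    (hne : ∃ w ∈ LieAlgebra.derivedSeries ℤ L 1, w ≠ (0 : L))
    (hnc : ¬ ∀ w ∈ LieAlgebra.derivedSeries ℤ L 1, ∀ y : L, ⁅y, w⁆ = 0)
    (hmin : ∀ J : LieIdeal ℤ L, J ≤ LieAlgebra.derivedSeries ℤ L 1 →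
      J = ⊥ ∨ J = LieAlgebra.derivedSeries ℤ L 1)
    (x : L) (hx : ¬ ∀ z ∈ LieAlgebra.derivedSeries ℤ L 1, ⁅x, z⁆ = 0) :
    ∀ u : LieSubalgebra ℤ L, {y : L | ⁅x, y⁆ = 0} ⊆ (u : Set L) →
      u.normalizer = u ∧ ((u : Set L) = {y : L | ⁅x, y⁆ = 0} ∨ u = ⊤) := by
  set A := LieAlgebra.derivedSeries ℤ L 1 with hA
  have hbr : ∀ y z : L, ⁅y, z⁆ ∈ A := by
    intro y z
    rw [hA, LieAlgebra.derivedSeries_def, LieAlgebra.derivedSeriesOfIdeal_succ,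
      LieAlgebra.derivedSeriesOfIdeal_zero]
    exact LieSubmodule.lie_mem_lie (LieSubmodule.mem_top y) (LieSubmodule.mem_top z)
  push_neg at hx
  obtain ⟨z₀, hz₀A, hz₀⟩ := hx
  -- The ideal K = A ∩ C_L(x)
  set K : LieIdeal ℤ L :=
    { carrier := {a | a ∈ A ∧ ⁅x, a⁆ = 0}
      add_mem' := by
        rintro a b ⟨haA, ha⟩ ⟨hbA, hb⟩
        exact ⟨A.add_mem haA hbA, by rw [lie_add, ha, hb, add_zero]⟩
      zero_mem' := ⟨A.zero_mem, lie_zero x⟩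
      smul_mem' := by
        rintro n a ⟨haA, ha⟩
        exact ⟨A.smul_mem n haA, by rw [lie_smul, ha, smul_zero]⟩
      lie_mem := by
        rintro y a ⟨haA, ha⟩
        refine ⟨A.lie_mem haA, ?_⟩
        rw [leibniz_lie, ha, lie_zero, add_zero]
        exact habel _ (hbr x y) _ haA } with hK
  have hKbot : ∀ a, a ∈ A → ⁅x, a⁆ = 0 → a = 0 := by
    have hKle : K ≤ A := fun a ha => ha.1
    rcases hmin K hKle with h | h
    · intro a haA hax
      exact (LieSubmodule.eq_bot_iff K).mp h a ⟨haA, hax⟩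
    · exfalso
      have : z₀ ∈ K := h ▸ hz₀A
      exact hz₀ this.2
  -- The ideal S = ⁅x, A⁆
  set S : LieIdeal ℤ L :=
    { carrier := {b | ∃ a, a ∈ A ∧ ⁅x, a⁆ = b}
      add_mem' := by
        rintro b c ⟨a, haA, ha⟩ ⟨a', ha'A, ha'⟩
        exact ⟨a + a', A.add_mem haA ha'A, by rw [lie_add, ha, ha']⟩
      zero_mem' := ⟨0, A.zero_mem, lie_zero x⟩
      smul_mem' := by
        rintro n b ⟨a, haA, ha⟩
        exact ⟨n • a, A.smul_mem n haA, by rw [lie_smul, ha]⟩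
      lie_mem := by
        rintro y b ⟨a, haA, ha⟩
        refine ⟨⁅y, a⁆, A.lie_mem haA, ?_⟩
        rw [← ha, leibniz_lie y x a, habel _ (hbr y x) _ haA, zero_add] } with hS
  have hSA : ∀ b ∈ A, ∃ a, a ∈ A ∧ ⁅x, a⁆ = b := by
    have hSle : S ≤ A := by
      rintro b ⟨a, haA, ha⟩
      exact ha ▸ A.lie_mem haA
    rcases hmin S hSle with h | h
    · exfalso
      apply hz₀
      have : ⁅x, z₀⁆ ∈ S := ⟨z₀, hz₀A, rfl⟩
      exact (LieSubmodule.eq_bot_iff S).mp h _ this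
    · intro b hb
      rw [← h] at hb
      exact hb
  -- decomposition L = C + A
  have hdec : ∀ y : L, ∃ a, a ∈ A ∧ ⁅x, y - a⁆ = 0 := by
    intro y
    obtain ⟨a, haA, ha⟩ := hSA ⁅x, y⁆ (hbr x y)
    exact ⟨a, haA, by rw [lie_sub, ha, sub_self]⟩
  intro u hu
  -- The ideal B = u ∩ A
  set B : LieIdeal ℤ L :=
    { carrier := {a | a ∈ A ∧ a ∈ u}
      add_mem' := by
        rintro a b ⟨haA, hau⟩ ⟨hbA, hbu⟩
        exact ⟨A.add_mem haA hbA, u.add_mem hau hbu⟩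
      zero_mem' := ⟨A.zero_mem, u.zero_mem⟩
      smul_mem' := by
        rintro n a ⟨haA, hau⟩
        exact ⟨A.smul_mem n haA, u.smul_mem n hau⟩
      lie_mem := by
        rintro y a ⟨haA, hau⟩
        obtain ⟨c, hcA, hc⟩ := hdec y
        refine ⟨A.lie_mem haA, ?_⟩
        have h1 : ⁅y, a⁆ = ⁅y - c, a⁆ := by
          rw [sub_lie, habel c hcA a haA, sub_zero]
        rw [h1]
        exact u.lie_mem (hu hc) hau } with hB
  have hBle : B ≤ A := fun a ha => ha.1
  rcases hmin B hBle with h | h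
  · -- B = ⊥ : u = C
    have hueq : (u : Set L) = {y : L | ⁅x, y⁆ = 0} := by
      apply Set.Subset.antisymm _ hu
      intro y hyu
      obtain ⟨a, haA, ha⟩ := hdec y
      have hau : a ∈ u := by
        have : y - a ∈ u := hu ha
        have := u.sub_mem hyu this
        simpa using this
      have ha0 : a = 0 := (LieSubmodule.eq_bot_iff B).mp h a ⟨haA, hau⟩
      show ⁅x, y⁆ = 0
      rw [← ha]
      congr 1
      rw [ha0, sub_zero]
    refine ⟨?_, Or.inl hueq⟩
    apply le_antisymm _ u.le_normalizer
    intro y hy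
    rw [u.mem_normalizer_iff] at hy
    obtain ⟨a, haA, ha⟩ := hdec y
    -- a centralizes C
    have hcent : ∀ c : L, ⁅x, c⁆ = 0 → ⁅a, c⁆ = 0 := by
      intro c hc
      have hyc : ⁅y, c⁆ ∈ u := hy c (hu hc)
      have hyac : ⁅y - a, c⁆ ∈ u := u.lie_mem (hu ha) (hu hc)
      have hac : ⁅a, c⁆ ∈ u := by
        have : ⁅a, c⁆ = ⁅y, c⁆ - ⁅y - a, c⁆ := by rw [sub_lie]; abel
        rw [this]
        exact u.sub_mem hyc hyac
      have hacC : ⁅x, ⁅a, c⁆⁆ = 0 := by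
        have : ⁅a, c⁆ ∈ (u : Set L) := hac
        rw [hueq] at this
        exact this
      have hacA : ⁅a, c⁆ ∈ A := by
        rw [← lie_skew]
        exact neg_mem (A.lie_mem haA)
      exact hKbot _ hacA hacC
    -- decompose x
    obtain ⟨a₂, ha₂A, ha₂⟩ := hdec x
    have hxa : ⁅x, a⁆ = 0 := by
      have h1 : ⁅x, a⁆ = ⁅x - a₂, a⁆ + ⁅a₂, a⁆ := by rw [← add_lie, sub_add_cancel]
      rw [h1, habel _ ha₂A _ haA, add_zero, ← lie_skew, hcent (x - a₂) ha₂, neg_zero]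
    have hxy : ⁅x, y⁆ = 0 := by
      have : ⁅x, y⁆ = ⁅x, y - a⁆ + ⁅x, a⁆ := by rw [← lie_add, sub_add_cancel]
      rw [this, ha, hxa, add_zero]
    exact hu hxy
  · -- B = A : u = ⊤
    have hutop : u = ⊤ := by
      rw [eq_top_iff]
      intro y _
      obtain ⟨a, haA, ha⟩ := hdec y
      have hau : a ∈ u := (h ▸ haA : a ∈ B).2
      have : y - a ∈ u := hu ha
      have := u.add_mem this hau
      simpa using this
    refine ⟨?_, Or.inr hutop⟩
    apply le_antisymm _ u.le_normalizer
    intro y _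
    rw [hutop]
    trivial
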